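/- arXiv:1110.3705 — 3 statements merged into one kernel-verified Lean document; each statement's English description precedes it below -/
import Mathlib

section
/- Adjustment lemma: if v' lies in the LU-region of v, then there exists a valuation v₁' in the neighbourhood of v' such that v ⊑_LU v₁'. -/
/-- The LU-preorder on (nonnegative real) clock valuations. -/
def simLU {X : Type*} (L U : X → ℕ) (v v' : X → ℝ) : Prop :=
  ∀ x, (v' x < v x → (L x : ℝ) < v' x) ∧ (v x < v' x → (U x : ℝ) < v x)

/-- v and v' satisfy exactly the same LU-guards. -/
def sameLUGuards {X : Type*} (L U : X → ℕ) (v v' : X → ℝ) : Prop :=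
  ∀ x, ∀ c : ℕ,
    (c ≤ L x → (((c : ℝ) < v x ↔ (c : ℝ) < v' x) ∧ ((c : ℝ) ≤ v x ↔ (c : ℝ) ≤ v' x))) ∧
    (c ≤ U x → ((v x < (c : ℝ) ↔ v' x < (c : ℝ)) ∧ (v x ≤ (c : ℝ) ↔ v' x ≤ (c : ℝ))))

/-- v' belongs to the LU-region of v. -/
def memRLU {X : Type*} (L U : X → ℕ) (v v' : X → ℝ) : Prop :=
  sameLUGuards L U v v' ∧
  ∀ x y : X, ⌊v x⌋ = ⌊v' x⌋ → ⌊v y⌋ = ⌊v' y⌋ →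
    v x ≤ (U x : ℝ) → v y ≤ (L y : ℝ) →
    (Int.fract (v x) < Int.fract (v y) → Int.fract (v' x) < Int.fract (v' y)) ∧
    (Int.fract (v x) = Int.fract (v y) → Int.fract (v' x) ≤ Int.fract (v' y))

/-- v₁ is in the neighbourhood of v. -/
def nbd {X : Type*} (v v₁ : X → ℝ) : Prop :=
  ∀ x y : X,
    ⌊v x⌋ = ⌊v₁ x⌋ ∧
    (Int.fract (v x) = 0 ↔ Int.fract (v₁ x) = 0) ∧
    (Int.fract (v x) < Int.fract (v y) → Int.fract (v₁ x) < Int.fract (v₁ y)) ∧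
    (Int.fract (v x) = Int.fract (v y) → Int.fract (v₁ x) = Int.fract (v₁ y))

set_option linter.unusedSectionVars false

section Guards
variable {X : Type*} {L U : X → ℕ} {v v' : X → ℝ}

lemma cast_floor_eq {x : X} (h0 : 0 ≤ v x) : ((⌊v x⌋.toNat : ℕ) : ℝ) = (⌊v x⌋ : ℝ) := by
  exact_mod_cast congrArg (Int.cast : ℤ → ℝ) (Int.toNat_of_nonneg (Int.floor_nonneg.2 h0))

/-- If v x ≤ U x and fract(v x) = 0 then v' x ≤ v x. -/
lemma guardU_zero (hg : sameLUGuards L U v v') {x : X} (h0 : 0 ≤ v x)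
    (hU : v x ≤ (U x : ℝ)) (hf : Int.fract (v x) = 0) : v' x ≤ v x := by
  have hfl : (⌊v x⌋ : ℝ) = v x := by
    have := Int.self_sub_floor (v x); rw [hf] at this; linarith
  set n : ℕ := ⌊v x⌋.toNat with hn
  have hcast : (n : ℝ) = v x := by rw [hn, cast_floor_eq h0, hfl]
  have hnU : n ≤ U x := by
    have : (n : ℝ) ≤ (U x : ℝ) := by rw [hcast]; exact hU
    exact_mod_cast this
  have hble : v' x ≤ (n : ℝ) := (((hg x n).2 hnU).2).1 (le_of_eq hcast.symm)
  linarith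

/-- If v x ≤ U x and fract(v x) > 0 then floors agree. -/
lemma guardU_pos (hg : sameLUGuards L U v v') {x : X} (h0 : 0 ≤ v x)
    (hU : v x ≤ (U x : ℝ)) (hf : 0 < Int.fract (v x)) : ⌊v x⌋ = ⌊v' x⌋ := by
  have hfr := Int.self_sub_floor (v x)
  have hlt : (⌊v x⌋ : ℝ) < v x := by linarith
  set n : ℕ := ⌊v x⌋.toNat with hn
  have hcast : (n : ℝ) = (⌊v x⌋ : ℝ) := cast_floor_eq h0
  have hnU : n ≤ U x := by
    have : (n : ℝ) ≤ (U x : ℝ) := by rw [hcast]; linarith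
    exact_mod_cast this
  have hn1U : n + 1 ≤ U x := by
    have : (n : ℝ) < (U x : ℝ) := by rw [hcast]; linarith
    exact_mod_cast this
  have h1 : ¬ v' x ≤ (n : ℝ) := by
    rw [← ((hg x n).2 hnU).2]; rw [hcast]; linarith
  have h2 : v' x < (n : ℝ) + 1 := by
    have hiff := ((hg x (n+1)).2 hn1U).1
    push_cast at hiff
    exact hiff.mp (by rw [hcast]; exact_mod_cast Int.lt_floor_add_one (v x))
  have : ⌊v' x⌋ = (n : ℤ) := by
    rw [Int.floor_eq_iff]
    constructor
    · push_cast; linarith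
    · push_cast; linarith
  rw [this, hn, Int.toNat_of_nonneg (Int.floor_nonneg.2 h0)]

/-- If v x ≤ L x and fract(v x) = 0 then v x ≤ v' x. -/
lemma guardL_zero (hg : sameLUGuards L U v v') {x : X} (h0 : 0 ≤ v x)
    (hL : v x ≤ (L x : ℝ)) (hf : Int.fract (v x) = 0) : v x ≤ v' x := by
  have hfl : (⌊v x⌋ : ℝ) = v x := by
    have := Int.self_sub_floor (v x); rw [hf] at this; linarith
  set n : ℕ := ⌊v x⌋.toNat with hn
  have hcast : (n : ℝ) = v x := by rw [hn, cast_floor_eq h0, hfl]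
  have hnL : n ≤ L x := by
    have : (n : ℝ) ≤ (L x : ℝ) := by rw [hcast]; exact hL
    exact_mod_cast this
  have hble : (n : ℝ) ≤ v' x := (((hg x n).1 hnL).2).1 (le_of_eq hcast)
  linarith

/-- If v x ≤ L x and fract(v x) > 0 then floors agree and fract(v' x) > 0. -/
lemma guardL_pos (hg : sameLUGuards L U v v') {x : X} (h0 : 0 ≤ v x)
    (hL : v x ≤ (L x : ℝ)) (hf : 0 < Int.fract (v x)) :
    ⌊v x⌋ = ⌊v' x⌋ ∧ 0 < Int.fract (v' x) := by
  have hfr := Int.self_sub_floor (v x)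
  have hlt : (⌊v x⌋ : ℝ) < v x := by linarith
  set n : ℕ := ⌊v x⌋.toNat with hn
  have hcast : (n : ℝ) = (⌊v x⌋ : ℝ) := cast_floor_eq h0
  have hnL : n ≤ L x := by
    have : (n : ℝ) ≤ (L x : ℝ) := by rw [hcast]; linarith
    exact_mod_cast this
  have hn1L : n + 1 ≤ L x := by
    have : (n : ℝ) < (L x : ℝ) := by rw [hcast]; linarith
    exact_mod_cast this
  have h1 : (n : ℝ) < v' x := ((hg x n).1 hnL).1.1 (by rw [hcast]; exact hlt)
  have h2 : ¬ ((n : ℝ) + 1 ≤ v' x) := by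
    have hiff := (((hg x (n+1)).1 hn1L).2)
    push_cast at hiff
    rw [← hiff, hcast]
    have := Int.lt_floor_add_one (v x); linarith
  push_neg at h2
  have hfl' : ⌊v' x⌋ = (n : ℤ) := by
    rw [Int.floor_eq_iff]; constructor
    · push_cast; linarith
    · push_cast; linarith
  constructor
  · rw [hfl', hn, Int.toNat_of_nonneg (Int.floor_nonneg.2 h0)]
  · have := Int.self_sub_floor (v' x)
    rw [hfl'] at this
    push_cast at this
    linarith

/-- If v x ≤ U x, floors agree and fract(v' x) > 0 then fract(v x) > 0. -/
lemma guardU_fract_pos (hg : sameLUGuards L U v v') {x : X} (h0 : 0 ≤ v x)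
    (hU : v x ≤ (U x : ℝ)) (hfl : ⌊v x⌋ = ⌊v' x⌋) (hf : 0 < Int.fract (v' x)) :
    0 < Int.fract (v x) := by
  by_contra hc
  push_neg at hc
  have hz : Int.fract (v x) = 0 := le_antisymm hc (Int.fract_nonneg _)
  have h1 := guardU_zero hg h0 hU hz
  have h2 := Int.self_sub_floor (v x)
  have h3 := Int.self_sub_floor (v' x)
  rw [hz] at h2
  rw [hfl] at h2
  linarith [Int.floor_le (v' x)]

end Guards

section Star
variable {X : Type*} [Fintype X] (L U : X → ℕ) (v v' : X → ℝ)

open scoped Classical in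
noncomputable def Aset (t : ℝ) : Finset ℝ :=
  insert 1 ((Finset.univ.filter
    (fun x : X => v x ≤ (U x : ℝ) ∧ ⌊v x⌋ = ⌊v' x⌋ ∧ t ≤ Int.fract (v' x))).image
    (fun x => Int.fract (v x)))

open scoped Classical in
noncomputable def Bset (t : ℝ) : Finset ℝ :=
  insert 0 ((Finset.univ.filter
    (fun y : X => v y ≤ (L y : ℝ) ∧ ⌊v y⌋ = ⌊v' y⌋ ∧ Int.fract (v' y) ≤ t)).image
    (fun y => Int.fract (v y)))

noncomputable def Astar (t : ℝ) : ℝ := (Aset U v v' t).min' (Finset.insert_nonempty _ _)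
noncomputable def Bstar (t : ℝ) : ℝ := (Bset L v v' t).max' (Finset.insert_nonempty _ _)
noncomputable def phi (t : ℝ) : ℝ := (1 - t) * Bstar L v v' t + t * Astar U v v' t

variable {L U v v'}

lemma mem_Aset {t r : ℝ} :
    r ∈ Aset U v v' t ↔ r = 1 ∨ ∃ x : X,
      (v x ≤ (U x : ℝ) ∧ ⌊v x⌋ = ⌊v' x⌋ ∧ t ≤ Int.fract (v' x)) ∧ Int.fract (v x) = r := by
  simp [Aset]

lemma mem_Bset {t r : ℝ} :
    r ∈ Bset L v v' t ↔ r = 0 ∨ ∃ y : X,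
      (v y ≤ (L y : ℝ) ∧ ⌊v y⌋ = ⌊v' y⌋ ∧ Int.fract (v' y) ≤ t) ∧ Int.fract (v y) = r := by
  simp [Bset]

lemma Astar_le {t : ℝ} {x : X} (hx : v x ≤ (U x : ℝ)) (hfl : ⌊v x⌋ = ⌊v' x⌋)
    (ht : t ≤ Int.fract (v' x)) : Astar U v v' t ≤ Int.fract (v x) :=
  Finset.min'_le _ _ (mem_Aset.2 (Or.inr ⟨x, ⟨hx, hfl, ht⟩, rfl⟩))

lemma le_Bstar {t : ℝ} {y : X} (hy : v y ≤ (L y : ℝ)) (hfl : ⌊v y⌋ = ⌊v' y⌋)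
    (ht : Int.fract (v' y) ≤ t) : Int.fract (v y) ≤ Bstar L v v' t :=
  Finset.le_max' _ _ (mem_Bset.2 (Or.inr ⟨y, ⟨hy, hfl, ht⟩, rfl⟩))

lemma Astar_le_one {t : ℝ} : Astar U v v' t ≤ 1 :=
  Finset.min'_le _ _ (mem_Aset.2 (Or.inl rfl))

lemma Bstar_nonneg {t : ℝ} : 0 ≤ Bstar L v v' t :=
  Finset.le_max' _ _ (mem_Bset.2 (Or.inl rfl))

lemma Astar_nonneg {t : ℝ} : 0 ≤ Astar U v v' t := by
  unfold Astar
  have hm := Finset.min'_mem (Aset U v v' t) (Finset.insert_nonempty _ _)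
  rcases mem_Aset.1 hm with h | ⟨x, _, hx⟩
  · rw [h]; norm_num
  · rw [← hx]; exact Int.fract_nonneg _
  
lemma Bstar_lt_one {t : ℝ} : Bstar L v v' t < 1 := by
  unfold Bstar
  have hm := Finset.max'_mem (Bset L v v' t) (Finset.insert_nonempty _ _)
  rcases mem_Bset.1 hm with h | ⟨y, _, hy⟩
  · rw [h]; norm_num
  · rw [← hy]; exact Int.fract_lt_one _

lemma Astar_mono {t t' : ℝ} (htt : t ≤ t') : Astar U v v' t ≤ Astar U v v' t' := by
  apply Finset.min'_le
  have hm := Finset.min'_mem (Aset U v v' t') (Finset.insert_nonempty _ _)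
  rcases mem_Aset.1 hm with h | ⟨x, ⟨h1, h2, h3⟩, hx⟩
  · exact mem_Aset.2 (Or.inl h)
  · exact mem_Aset.2 (Or.inr ⟨x, ⟨h1, h2, le_trans htt h3⟩, hx⟩)

lemma Bstar_mono {t t' : ℝ} (htt : t ≤ t') : Bstar L v v' t ≤ Bstar L v v' t' := by
  apply Finset.max'_le
  intro r hr
  rcases mem_Bset.1 hr with h | ⟨y, ⟨h1, h2, h3⟩, hy⟩
  · rw [h]; exact Bstar_nonneg
  · exact Finset.le_max' _ _ (mem_Bset.2 (Or.inr ⟨y, ⟨h1, h2, le_trans h3 htt⟩, hy⟩))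

/-- Cross inequality from the region condition. -/
lemma cross_le (h : memRLU L U v v') {x y : X}
    (hxU : v x ≤ (U x : ℝ)) (hxf : ⌊v x⌋ = ⌊v' x⌋)
    (hyL : v y ≤ (L y : ℝ)) (hyf : ⌊v y⌋ = ⌊v' y⌋)
    (hle : Int.fract (v' y) ≤ Int.fract (v' x)) :
    Int.fract (v y) ≤ Int.fract (v x) := by
  by_contra hc
  push_neg at hc
  exact absurd ((h.2 x y hxf hyf hxU hyL).1 hc) (not_lt.2 hle)

lemma cross_lt (h : memRLU L U v v') {x y : X}
    (hxU : v x ≤ (U x : ℝ)) (hxf : ⌊v x⌋ = ⌊v' x⌋)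
    (hyL : v y ≤ (L y : ℝ)) (hyf : ⌊v y⌋ = ⌊v' y⌋)
    (hlt : Int.fract (v' y) < Int.fract (v' x)) :
    Int.fract (v y) < Int.fract (v x) := by
  rcases lt_trichotomy (Int.fract (v x)) (Int.fract (v y)) with hl | he | hg
  · exact absurd ((h.2 x y hxf hyf hxU hyL).1 hl) (by linarith)
  · exact absurd ((h.2 x y hxf hyf hxU hyL).2 he) (by linarith)
  · exact hg

lemma Bstar_le_Astar (h : memRLU L U v v') {t t' : ℝ} (htt : t ≤ t') :
    Bstar L v v' t ≤ Astar U v v' t' := by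
  apply Finset.max'_le
  intro r hr
  rcases mem_Bset.1 hr with hr0 | ⟨y, ⟨hy1, hy2, hy3⟩, hy⟩
  · rw [hr0]; exact Astar_nonneg
  · apply Finset.le_min'
    intro s hs
    rcases mem_Aset.1 hs with hs1 | ⟨x, ⟨hx1, hx2, hx3⟩, hx⟩
    · rw [hs1, ← hy]; exact le_of_lt (Int.fract_lt_one _)
    · rw [← hy, ← hx]
      exact cross_le h hx1 hx2 hy1 hy2 (by linarith)

/-- positivity of Astar for positive levels -/
lemma Astar_pos (hg : sameLUGuards L U v v') (hv : ∀ x, 0 ≤ v x) {t : ℝ} (ht : 0 < t) :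
    0 < Astar U v v' t := by
  unfold Astar
  have hm := Finset.min'_mem (Aset U v v' t) (Finset.insert_nonempty _ _)
  rcases mem_Aset.1 hm with h1 | ⟨x, ⟨hx1, hx2, hx3⟩, hx⟩
  · rw [h1]; norm_num
  · rw [← hx]
    exact guardU_fract_pos hg (hv x) hx1 hx2 (lt_of_lt_of_le ht hx3)

end Star

section Phi
variable {X : Type*} [Fintype X] {L U : X → ℕ} {v v' : X → ℝ}

lemma Bstar_zero (hg : sameLUGuards L U v v') (hv : ∀ x, 0 ≤ v x) :
    Bstar L v v' 0 = 0 := by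
  refine le_antisymm ?_ Bstar_nonneg
  apply Finset.max'_le
  intro r hr
  rcases mem_Bset.1 hr with hr0 | ⟨y, ⟨hy1, hy2, hy3⟩, hy⟩
  · rw [hr0]
  · rw [← hy]
    by_contra hc
    push_neg at hc
    have := (guardL_pos hg (hv y) hy1 hc).2
    linarith

lemma phi_nonneg {t : ℝ} (ht0 : 0 ≤ t) (ht1 : t < 1) : 0 ≤ phi L U v v' t := by
  unfold phi
  have h1 : (0:ℝ) ≤ (1 - t) * Bstar L v v' t := mul_nonneg (by linarith) Bstar_nonneg
  have h2 : (0:ℝ) ≤ t * Astar U v v' t := mul_nonneg ht0 Astar_nonneg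
  linarith

lemma phi_lt_one {t : ℝ} (ht0 : 0 ≤ t) (ht1 : t < 1) : phi L U v v' t < 1 := by
  unfold phi
  have hB : Bstar L v v' t < 1 := Bstar_lt_one
  have hA : Astar U v v' t ≤ 1 := Astar_le_one
  nlinarith

lemma phi_zero (hg : sameLUGuards L U v v') (hv : ∀ x, 0 ≤ v x) :
    phi L U v v' 0 = 0 := by
  unfold phi
  rw [Bstar_zero hg hv]
  ring

lemma phi_pos (hg : sameLUGuards L U v v') (hv : ∀ x, 0 ≤ v x)
    {t : ℝ} (ht0 : 0 < t) (ht1 : t < 1) : 0 < phi L U v v' t := by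
  unfold phi
  have h1 : (0:ℝ) ≤ (1 - t) * Bstar L v v' t := mul_nonneg (by linarith) Bstar_nonneg
  have h2 : (0:ℝ) < t * Astar U v v' t := mul_pos ht0 (Astar_pos hg hv ht0)
  linarith

lemma phi_le_Astar (h : memRLU L U v v') {t : ℝ} (ht0 : 0 ≤ t) (ht1 : t < 1) :
    phi L U v v' t ≤ Astar U v v' t := by
  unfold phi
  have hBA : Bstar L v v' t ≤ Astar U v v' t := Bstar_le_Astar h le_rfl
  nlinarith

lemma Bstar_le_phi (h : memRLU L U v v') {t : ℝ} (ht0 : 0 ≤ t) (ht1 : t < 1) :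
    Bstar L v v' t ≤ phi L U v v' t := by
  unfold phi
  have hBA : Bstar L v v' t ≤ Astar U v v' t := Bstar_le_Astar h le_rfl
  nlinarith

lemma phi_strictMono (h : memRLU L U v v') (hv : ∀ x, 0 ≤ v x)
    {t t' : ℝ} (ht0 : 0 ≤ t) (htt : t < t') (ht1 : t' < 1) :
    phi L U v v' t < phi L U v v' t' := by
  have hBB : Bstar L v v' t ≤ Bstar L v v' t' := Bstar_mono (le_of_lt htt)
  have hAA : Astar U v v' t ≤ Astar U v v' t' := Astar_mono (le_of_lt htt)
  have hBA' : Bstar L v v' t' ≤ Astar U v v' t' := Bstar_le_Astar h le_rfl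
  have hBA : Bstar L v v' t ≤ Astar U v v' t := Bstar_le_Astar h le_rfl
  rcases lt_or_eq_of_le hBA' with hlt | heq
  · -- B' < A'
    unfold phi
    nlinarith
  · -- B' = A' =: c
    rcases lt_or_eq_of_le hBB with hlt | heqB
    · -- B < B'
      unfold phi
      nlinarith
    · -- B = B' = A' : contradiction via attainment
      exfalso
      have ht0' : (0:ℝ) < t' := lt_of_le_of_lt ht0 htt
      have hcpos : 0 < Astar U v v' t' := Astar_pos h.1 hv ht0'
      have hBmem : Bstar L v v' t ∈ Bset L v v' t := by
        unfold Bstar; exact Finset.max'_mem _ _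
      rcases mem_Bset.1 hBmem with h0 | ⟨y, ⟨hy1, hy2, hy3⟩, hy⟩
      · rw [h0] at heqB; linarith
      · have hAmem : Astar U v v' t' ∈ Aset U v v' t' := by
          unfold Astar; exact Finset.min'_mem _ _
        rcases mem_Aset.1 hAmem with h1 | ⟨x, ⟨hx1, hx2, hx3⟩, hx⟩
        · have := Bstar_lt_one (L := L) (v := v) (v' := v') (t := t')
          rw [h1] at heq; linarith
        · have hc := cross_lt h hx1 hx2 hy1 hy2 (by linarith : Int.fract (v' y) < Int.fract (v' x))
          rw [hy, hx] at hc
          linarith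

end Phi


/-- Adjustment lemma: if v' ∈ r_LU(v), there is v₁' ∈ nbd(v') with v ⊑_LU v₁'. -/
theorem adjustment {X : Type*} [Fintype X] (L U : X → ℕ)
    (v v' : X → ℝ) (hv : ∀ x, 0 ≤ v x) (hv' : ∀ x, 0 ≤ v' x)
    (h : memRLU L U v v') :
    ∃ v₁' : X → ℝ, nbd v' v₁' ∧ simLU L U v v₁' := by
  classical
  have hg : sameLUGuards L U v v' := h.1
  have ht0 : ∀ x : X, 0 ≤ Int.fract (v' x) := fun x => Int.fract_nonneg _
  have ht1 : ∀ x : X, Int.fract (v' x) < 1 := fun x => Int.fract_lt_one _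
  have hp0 : ∀ x : X, 0 ≤ phi L U v v' (Int.fract (v' x)) :=
    fun x => phi_nonneg (ht0 x) (ht1 x)
  have hp1 : ∀ x : X, phi L U v v' (Int.fract (v' x)) < 1 :=
    fun x => phi_lt_one (ht0 x) (ht1 x)
  have hfr : ∀ x : X,
      Int.fract ((⌊v' x⌋ : ℝ) + phi L U v v' (Int.fract (v' x)))
        = phi L U v v' (Int.fract (v' x)) := by
    intro x
    rw [Int.fract_intCast_add]
    exact Int.fract_eq_self.2 ⟨hp0 x, hp1 x⟩
  have hflr : ∀ x : X,
      ⌊(⌊v' x⌋ : ℝ) + phi L U v v' (Int.fract (v' x))⌋ = ⌊v' x⌋ := by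
    intro x
    rw [Int.floor_intCast_add]
    have hz : ⌊phi L U v v' (Int.fract (v' x))⌋ = 0 := by
      rw [Int.floor_eq_iff] <;> simp [hp0 x, hp1 x, le_of_lt (hp1 x)]
    omega
  refine ⟨fun x => (⌊v' x⌋ : ℝ) + phi L U v v' (Int.fract (v' x)), ?_, ?_⟩
  · intro x y
    refine ⟨(hflr x).symm, ?_, ?_, ?_⟩
    · rw [hfr x]
      constructor
      · intro hz
        rw [hz]
        exact phi_zero hg hv
      · intro hz
        by_contra hc
        have hpos : 0 < Int.fract (v' x) := lt_of_le_of_ne (ht0 x) (Ne.symm hc)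
        have := phi_pos hg hv hpos (ht1 x)
        rw [hz] at this
        exact lt_irrefl _ this
    · intro hlt
      rw [hfr x, hfr y]
      exact phi_strictMono h hv (ht0 x) hlt (ht1 y)
    · intro heq
      rw [hfr x, hfr y, heq]
  · intro x
    have hfx := Int.self_sub_floor (v x)
    have hfx' := Int.self_sub_floor (v' x)
    constructor
    · -- v₁' x < v x → L x < v₁' x
      show (⌊v' x⌋ : ℝ) + phi L U v v' (Int.fract (v' x)) < v x →
        (L x : ℝ) < (⌊v' x⌋ : ℝ) + phi L U v v' (Int.fract (v' x))
      intro hlt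
      by_cases hL : v x ≤ (L x : ℝ)
      · exfalso
        rcases eq_or_lt_of_le (Int.fract_nonneg (v x)) with hf0 | hfpos
        · have hge := guardL_zero hg (hv x) hL hf0.symm
          have hmono : (⌊v x⌋ : ℝ) ≤ (⌊v' x⌋ : ℝ) := by
            exact_mod_cast Int.floor_le_floor hge
          linarith [hp0 x]
        · obtain ⟨hfl, _⟩ := guardL_pos hg (hv x) hL hfpos
          have hB : Int.fract (v x) ≤ Bstar L v v' (Int.fract (v' x)) :=
            le_Bstar hL hfl le_rfl
          have hphi : Bstar L v v' (Int.fract (v' x)) ≤ phi L U v v' (Int.fract (v' x)) :=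
            Bstar_le_phi h (ht0 x) (ht1 x)
          have hfleq : (⌊v x⌋ : ℝ) = (⌊v' x⌋ : ℝ) := by exact_mod_cast hfl
          linarith
      · push_neg at hL
        have hLx : ((L x : ℕ) : ℝ) < v' x := ((hg x (L x)).1 le_rfl).1.1 hL
        have hle : (L x : ℤ) ≤ ⌊v' x⌋ := Int.le_floor.2 (by exact_mod_cast le_of_lt hLx)
        rcases lt_or_eq_of_le hle with hlt2 | heq2
        · have hcast : ((L x : ℕ) : ℝ) + 1 ≤ (⌊v' x⌋ : ℝ) := by exact_mod_cast hlt2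
          linarith [hp0 x]
        · have hfe : ((L x : ℕ) : ℝ) = (⌊v' x⌋ : ℝ) := by exact_mod_cast heq2
          have hfpos' : 0 < Int.fract (v' x) := by linarith
          have := phi_pos hg hv hfpos' (ht1 x)
          linarith
    · -- v x < v₁' x → U x < v x
      show v x < (⌊v' x⌋ : ℝ) + phi L U v v' (Int.fract (v' x)) → (U x : ℝ) < v x
      intro hgt
      by_contra hU
      push_neg at hU
      rcases eq_or_lt_of_le (Int.fract_nonneg (v x)) with hf0 | hfpos
      · have hle := guardU_zero hg (hv x) hU hf0.symm
        have hmono : ⌊v' x⌋ ≤ ⌊v x⌋ := Int.floor_le_floor hle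
        rcases lt_or_eq_of_le hmono with hlt2 | heq2
        · have hcast : (⌊v' x⌋ : ℝ) + 1 ≤ (⌊v x⌋ : ℝ) := by exact_mod_cast hlt2
          linarith [hp1 x]
        · have hfleq : (⌊v' x⌋ : ℝ) = (⌊v x⌋ : ℝ) := by exact_mod_cast heq2
          have hveq : v' x = v x := by
            have h1 : (⌊v' x⌋ : ℝ) ≤ v' x := Int.floor_le _
            linarith
          have hz : Int.fract (v' x) = 0 := by
            rw [hveq]; rw [hveq] at hfx'; linarith
          have hphiz : phi L U v v' (Int.fract (v' x)) = 0 := by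
            rw [hz]; exact phi_zero hg hv
          linarith
      · have hfl := guardU_pos hg (hv x) hU hfpos
        have hA : Astar U v v' (Int.fract (v' x)) ≤ Int.fract (v x) :=
          Astar_le hU hfl le_rfl
        have hphi : phi L U v v' (Int.fract (v' x)) ≤ Astar U v v' (Int.fract (v' x)) :=
          phi_le_Astar h (ht0 x) (ht1 x)
        have hfleq : (⌊v x⌋ : ℝ) = (⌊v' x⌋ : ℝ) := by exact_mod_cast hfl
        linarith
end

section
/- For a zone Z, the set a_LU(Z) is a union of regions: if two valuations v and w belong to the same region (with respect to bounds α(x) = max(L(x), U(x))) and v ∈ a_LU(Z), then w ∈ a_LU(Z). -/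
/-- a_LU(Z) = {v : ∃ v' ∈ Z, v ⊑_LU v'}. -/
def aLU {X : Type*} (L U : X → ℕ) (Z : Set (X → ℝ)) : Set (X → ℝ) :=
  {v | ∃ v' ∈ Z, simLU L U v v'}

/-- Region equivalence with respect to a bound function α. -/
def regEquiv {X : Type*} (α : X → ℕ) (v w : X → ℝ) : Prop :=
  (∀ x, ((α x : ℝ) < v x ∧ (α x : ℝ) < w x) ∨
    (⌊v x⌋ = ⌊w x⌋ ∧ (Int.fract (v x) = 0 ↔ Int.fract (w x) = 0))) ∧
  (∀ x y, v x ≤ (α x : ℝ) → v y ≤ (α y : ℝ) →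
    (Int.fract (v x) < Int.fract (v y) ↔ Int.fract (w x) < Int.fract (w y)))

/-- An atomic zone constraint: `(i, j, strict, c)` means `ev(j) − ev(i) ◁ c`,
with `ev(none) = 0`, `ev(some x) = v(x)`. -/
def csat {X : Type*} (v : X → ℝ) : Option X × Option X × Bool × ℤ → Prop :=
  fun p =>
    let ev : Option X → ℝ := fun o => o.elim 0 v
    if p.2.2.1 then ev p.2.1 - ev p.1 < (p.2.2.2 : ℝ) else ev p.2.1 - ev p.1 ≤ (p.2.2.2 : ℝ)

/-- A zone is a set of valuations defined by a finite conjunction of difference constraints. -/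
def IsZone {X : Type*} (Z : Set (X → ℝ)) : Prop :=
  ∃ l : List (Option X × Option X × Bool × ℤ), Z = {v | ∀ cst ∈ l, csat v cst}

lemma csat_false' {X : Type*} (u : X → ℝ) (i j : Option X) (c : ℤ) :
    csat u (i, j, false, c) ↔ j.elim 0 u - i.elim 0 u ≤ (c : ℝ) := by
  simp [csat]

lemma csat_true' {X : Type*} (u : X → ℝ) (i j : Option X) (c : ℤ) :
    csat u (i, j, true, c) ↔ j.elim 0 u - i.elim 0 u < (c : ℝ) := by
  simp [csat]

lemma int_lt_transfer (m B : ℤ) (f f' : ℝ) (hf1 : f < 1) (hf' : 0 ≤ f')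
    (hzero : 0 < f → 0 < f') (hlt : (m : ℝ) < (B : ℝ) + f) : (m : ℝ) < (B : ℝ) + f' := by
  have hmB : m ≤ B := by
    have : (m : ℝ) < (B : ℝ) + 1 := by linarith
    exact_mod_cast Int.lt_add_one_iff.mp (by exact_mod_cast this)
  rcases lt_or_eq_of_le hmB with h | h
  · have : (m : ℝ) + 1 ≤ (B : ℝ) := by exact_mod_cast h
    linarith
  · subst h
    have : 0 < f := by linarith
    have := hzero this
    linarith

lemma lex_lt_transfer (B B' : ℤ) (f f' e e' : ℝ) (hf : 0 ≤ f) (hf1' : f' < 1)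
    (he : 0 ≤ e) (he1 : e < 1) (he' : 0 ≤ e') (he1' : e' < 1)
    (hff : f < f' → e < e') (hlt : (B : ℝ) + f < (B' : ℝ) + f') :
    (B : ℝ) + e < (B' : ℝ) + e' := by
  have hBB : B ≤ B' := by
    have : (B : ℝ) < (B' : ℝ) + 1 := by linarith
    exact_mod_cast Int.lt_add_one_iff.mp (by exact_mod_cast this)
  rcases lt_or_eq_of_le hBB with h | h
  · have : (B : ℝ) + 1 ≤ (B' : ℝ) := by exact_mod_cast h
    linarith
  · subst h
    have : f < f' := by linarith
    have := hff this
    linarith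

lemma csat_transfer (Bj Bi c : ℤ) (s t s' t' : ℝ)
    (hs : 0 ≤ s) (hs1 : s < 1) (ht : 0 ≤ t) (ht1 : t < 1)
    (hs' : 0 ≤ s') (hs1' : s' < 1) (ht' : 0 ≤ t') (ht1' : t' < 1)
    (h1 : s < t ↔ s' < t') (h2 : t < s ↔ t' < s') :
    (((Bj : ℝ) + s) - ((Bi : ℝ) + t) ≤ (c : ℝ) → ((Bj : ℝ) + s') - ((Bi : ℝ) + t') ≤ (c : ℝ)) ∧
    (((Bj : ℝ) + s) - ((Bi : ℝ) + t) < (c : ℝ) → ((Bj : ℝ) + s') - ((Bi : ℝ) + t') < (c : ℝ)) := by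
  set A : ℤ := Bj - Bi with hA
  have hAr : (Bj : ℝ) - (Bi : ℝ) = (A : ℝ) := by push_cast [hA]; ring
  rcases lt_trichotomy s t with hc | hc | hc
  · have hc' : s' < t' := h1.mp hc
    constructor <;> intro hd
    all_goals {
      have hAc : A ≤ c := by
        have : (A : ℝ) < (c : ℝ) + 1 := by linarith
        exact_mod_cast Int.lt_add_one_iff.mp (by exact_mod_cast this)
      have : (A : ℝ) ≤ (c : ℝ) := by exact_mod_cast hAc
      linarith }
  · have hs't' : s' = t' := by
      have h1' := h1.not.mp (by simp [hc])
      have h2' := h2.not.mp (by simp [hc])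
      push_neg at h1' h2'
      linarith
    constructor <;> intro hd <;> rw [hc] at hd <;> rw [hs't'] <;> linarith
  · have hc' : t' < s' := h2.mp hc
    constructor <;> intro hd
    all_goals {
      have hAc : A + 1 ≤ c := by
        have : (A : ℝ) < (c : ℝ) := by linarith
        exact_mod_cast Int.add_one_le_iff.mpr (by exact_mod_cast this)
      have : (A : ℝ) + 1 ≤ (c : ℝ) := by exact_mod_cast hAc
      linarith }

lemma exists_interp (D : Finset ℝ) (h : ℝ → ℝ)
    (hD0 : (0:ℝ) ∈ D) (hDmem : ∀ a ∈ D, 0 ≤ a ∧ a < 1)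
    (hh0 : h 0 = 0)
    (hhmem : ∀ a ∈ D, 0 ≤ h a ∧ h a < 1)
    (hmono : ∀ a ∈ D, ∀ b ∈ D, a < b → h a < h b) :
    ∃ g : ℝ → ℝ, (∀ a ∈ D, g a = h a) ∧
      (∀ s t : ℝ, 0 ≤ s → s < 1 → 0 ≤ t → t < 1 → s < t → g s < g t) ∧
      (∀ t : ℝ, 0 ≤ t → t < 1 → 0 ≤ g t ∧ g t < 1) := by
  classical
  set h1 : ℝ → ℝ := fun a => if a = 1 then 1 else h a with hh1def
  set D1 : Finset ℝ := insert 1 D with hD1def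
  have h1eq : ∀ a ∈ D, h1 a = h a := by
    intro a ha
    simp only [hh1def]
    rw [if_neg (ne_of_lt (hDmem a ha).2)]
  have h1one : h1 1 = 1 := by simp [hh1def]
  have hmono1 : ∀ a ∈ D1, ∀ b ∈ D1, a < b → h1 a < h1 b := by
    intro a ha b hb hab
    rcases Finset.mem_insert.mp hb with hb1 | hbD
    · subst hb1
      have haD : a ∈ D := by
        rcases Finset.mem_insert.mp ha with h' | h'
        · exact absurd hab (by simp [h'])
        · exact h'
      rw [h1eq a haD, h1one]
      exact (hhmem a haD).2
    · have hb1 : b < 1 := (hDmem b hbD).2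
      have haD : a ∈ D := by
        rcases Finset.mem_insert.mp ha with h' | h'
        · exact absurd hab (by simp [h']; linarith)
        · exact h'
      rw [h1eq a haD, h1eq b hbD]
      exact hmono a haD b hbD hab
  have hmono1' : ∀ a ∈ D1, ∀ b ∈ D1, a ≤ b → h1 a ≤ h1 b := by
    intro a ha b hb hab
    rcases eq_or_lt_of_le hab with h' | h'
    · subst h'; exact le_refl _
    · exact le_of_lt (hmono1 a ha b hb h')
  set lo : ℝ → ℝ := fun t =>
    if hne : (D.filter (fun a => a ≤ t)).Nonempty then (D.filter (fun a => a ≤ t)).max' hne else 0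
    with hlodef
  set hi : ℝ → ℝ := fun t =>
    if hne : (D1.filter (fun a => t < a)).Nonempty then (D1.filter (fun a => t < a)).min' hne else 1
    with hhidef
  have hlo : ∀ t : ℝ, 0 ≤ t → lo t ∈ D ∧ lo t ≤ t ∧ ∀ a ∈ D, a ≤ t → a ≤ lo t := by
    intro t ht
    have hne : (D.filter (fun a => a ≤ t)).Nonempty := ⟨0, Finset.mem_filter.mpr ⟨hD0, ht⟩⟩
    simp only [hlodef, dif_pos hne]
    refine ⟨?_, ?_, ?_⟩
    · exact (Finset.mem_filter.mp ((D.filter (fun a => a ≤ t)).max'_mem hne)).1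
    · exact (Finset.mem_filter.mp ((D.filter (fun a => a ≤ t)).max'_mem hne)).2
    · intro a ha hat
      exact Finset.le_max' (D.filter (fun a => a ≤ t)) a (Finset.mem_filter.mpr ⟨ha, hat⟩)
  have hhi : ∀ t : ℝ, t < 1 → hi t ∈ D1 ∧ t < hi t ∧ ∀ a ∈ D1, t < a → hi t ≤ a := by
    intro t ht
    have hne : (D1.filter (fun a => t < a)).Nonempty :=
      ⟨1, Finset.mem_filter.mpr ⟨Finset.mem_insert_self _ _, ht⟩⟩
    simp only [hhidef, dif_pos hne]
    refine ⟨?_, ?_, ?_⟩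
    · exact (Finset.mem_filter.mp ((D1.filter (fun a => t < a)).min'_mem hne)).1
    · exact (Finset.mem_filter.mp ((D1.filter (fun a => t < a)).min'_mem hne)).2
    · intro a ha hat
      exact Finset.min'_le (D1.filter (fun a => t < a)) a (Finset.mem_filter.mpr ⟨ha, hat⟩)
  set g : ℝ → ℝ := fun t =>
    if t ∈ D then h t
    else h1 (lo t) + (h1 (hi t) - h1 (lo t)) * (t - lo t) / (hi t - lo t)
    with hgdef
  have hgD : ∀ a ∈ D, g a = h a := by
    intro a ha
    simp only [hgdef, if_pos ha]
  have hgap : ∀ t : ℝ, 0 ≤ t → t < 1 → t ∉ D → h1 (lo t) < g t ∧ g t < h1 (hi t) := by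
    intro t ht0 ht1 htD
    obtain ⟨hloD, hlole, _⟩ := hlo t ht0
    obtain ⟨hhiD, hhigt, _⟩ := hhi t ht1
    have hlolt : lo t < t := lt_of_le_of_ne hlole (fun h' => htD (h' ▸ hloD))
    have hlohi : lo t < hi t := lt_trans hlolt hhigt
    have hΔ : 0 < h1 (hi t) - h1 (lo t) := by
      have := hmono1 (lo t) (Finset.mem_insert_of_mem hloD) (hi t) hhiD hlohi
      linarith
    have hratio1 : (t - lo t) / (hi t - lo t) < 1 :=
      (div_lt_one (by linarith)).mpr (by linarith)
    have hratio0 : 0 < (t - lo t) / (hi t - lo t) := div_pos (by linarith) (by linarith)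
    have hgt : g t = h1 (lo t) + (h1 (hi t) - h1 (lo t)) * ((t - lo t) / (hi t - lo t)) := by
      simp only [hgdef, if_neg htD]; ring
    rw [hgt]
    constructor
    · nlinarith
    · nlinarith
  have hgmono : ∀ s t : ℝ, 0 ≤ s → s < 1 → 0 ≤ t → t < 1 → s < t → g s < g t := by
    intro s t hs0 hs1 ht0 ht1 hst
    by_cases hsD : s ∈ D <;> by_cases htD : t ∈ D
    · rw [hgD s hsD, hgD t htD]; exact hmono s hsD t htD hst
    · obtain ⟨hloD, _, hlomax⟩ := hlo t ht0
      have h1' : s ≤ lo t := hlomax s hsD (le_of_lt hst)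
      have h2' : h1 s ≤ h1 (lo t) :=
        hmono1' s (Finset.mem_insert_of_mem hsD) (lo t) (Finset.mem_insert_of_mem hloD) h1'
      have := (hgap t ht0 ht1 htD).1
      rw [hgD s hsD, ← h1eq s hsD]
      linarith
    · obtain ⟨hhiD, _, hhimin⟩ := hhi s hs1
      have h1' : hi s ≤ t := hhimin t (Finset.mem_insert_of_mem htD) hst
      have h2' : h1 (hi s) ≤ h1 t := hmono1' (hi s) hhiD t (Finset.mem_insert_of_mem htD) h1'
      have := (hgap s hs0 hs1 hsD).2
      rw [hgD t htD, ← h1eq t htD]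
      linarith
    · obtain ⟨hloDs, hloles, hlomaxs⟩ := hlo s hs0
      obtain ⟨hhiDs, hhigts, hhimins⟩ := hhi s hs1
      obtain ⟨hloDt, hlolet, hlomaxt⟩ := hlo t ht0
      obtain ⟨hhiDt, hhigtt, hhimint⟩ := hhi t ht1
      by_cases hbt : t < hi s
      · have hlott : lo t ≤ s := by
          by_contra hcon
          push_neg at hcon
          have := hhimins (lo t) (Finset.mem_insert_of_mem hloDt) hcon
          linarith
        have hloeq : lo s = lo t :=
          le_antisymm (hlomaxt (lo s) hloDs (le_trans hloles (le_of_lt hst)))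
            (hlomaxs (lo t) hloDt hlott)
        have hhieq : hi s = hi t :=
          le_antisymm (hhimins (hi t) hhiDt (lt_trans hst hhigtt)) (hhimint (hi s) hhiDs hbt)
        have hlolts : lo s < s := lt_of_le_of_ne hloles (fun h' => hsD (h' ▸ hloDs))
        have hlohis : lo s < hi s := lt_trans hlolts hhigts
        have hΔ : 0 < h1 (hi s) - h1 (lo s) := by
          have := hmono1 (lo s) (Finset.mem_insert_of_mem hloDs) (hi s) hhiDs hlohis
          linarith
        have hgs : g s = h1 (lo s) + (h1 (hi s) - h1 (lo s)) * (s - lo s) / (hi s - lo s) := by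
          simp only [hgdef, if_neg hsD]
        have hgt : g t = h1 (lo s) + (h1 (hi s) - h1 (lo s)) * (t - lo s) / (hi s - lo s) := by
          simp only [hgdef, if_neg htD, ← hloeq, ← hhieq]
        rw [hgs, hgt]
        have hd : (h1 (hi s) - h1 (lo s)) * (s - lo s) / (hi s - lo s)
            < (h1 (hi s) - h1 (lo s)) * (t - lo s) / (hi s - lo s) :=
          (div_lt_div_iff_of_pos_right (by linarith)).mpr (by nlinarith)
        linarith
      · push_neg at hbt
        have hhisD : hi s ∈ D := by
          rcases Finset.mem_insert.mp hhiDs with h' | h'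
          · exfalso; rw [h'] at hbt; linarith
          · exact h'
        have h1' : hi s ≤ lo t := hlomaxt (hi s) hhisD hbt
        have h2' : h1 (hi s) ≤ h1 (lo t) :=
          hmono1' (hi s) hhiDs (lo t) (Finset.mem_insert_of_mem hloDt) h1'
        have ha := (hgap s hs0 hs1 hsD).2
        have hb := (hgap t ht0 ht1 htD).1
        linarith
  have hgbound : ∀ t : ℝ, 0 ≤ t → t < 1 → 0 ≤ g t ∧ g t < 1 := by
    intro t ht0 ht1
    by_cases htD : t ∈ D
    · rw [hgD t htD]; exact hhmem t htD
    · obtain ⟨hloD, _, _⟩ := hlo t ht0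
      obtain ⟨hhiD, _, _⟩ := hhi t ht1
      have ha := (hgap t ht0 ht1 htD).1
      have hb := (hgap t ht0 ht1 htD).2
      have h1lo : 0 ≤ h1 (lo t) := by rw [h1eq _ hloD]; exact (hhmem _ hloD).1
      have h1hi : h1 (hi t) ≤ 1 := by
        rcases Finset.mem_insert.mp hhiD with h' | h'
        · rw [h', h1one]
        · rw [h1eq _ h']; exact le_of_lt (hhmem _ h').2
      constructor <;> linarith
  exact ⟨g, hgD, hgmono, hgbound⟩

/-- For a zone Z, a_LU(Z) is a union of regions (w.r.t. α(x) = max(L(x), U(x))). -/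
theorem aLU_union_of_regions {X : Type*} [Fintype X] (L U : X → ℕ)
    (Z : Set (X → ℝ)) (hZ : IsZone Z)
    (v w : X → ℝ) (hv : ∀ x, 0 ≤ v x) (hw : ∀ x, 0 ≤ w x)
    (hreg : regEquiv (fun x => max (L x) (U x)) v w)
    (hmem : v ∈ aLU L U Z) :
    w ∈ aLU L U Z := by
  classical
  obtain ⟨l, hlZ⟩ := hZ
  subst hlZ
  obtain ⟨v', hv'Z, hsim⟩ := hmem
  obtain ⟨hreg1, hreg2⟩ := hreg
  have hfl : ∀ x, v x ≤ ((max (L x) (U x) : ℕ) : ℝ) →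
      ⌊v x⌋ = ⌊w x⌋ ∧ (Int.fract (v x) = 0 ↔ Int.fract (w x) = 0) := by
    intro x hx
    rcases hreg1 x with ⟨h1, _⟩ | h2
    · exact absurd hx (not_le.mpr h1)
    · exact h2
  have hzero : ∀ x, v x ≤ ((max (L x) (U x) : ℕ) : ℝ) →
      (0 < Int.fract (v x) → 0 < Int.fract (w x)) := by
    intro x hx hpos
    rcases lt_or_eq_of_le (Int.fract_nonneg (w x)) with h | h
    · exact h
    · exfalso
      have := (hfl x hx).2.mpr h.symm
      linarith
  set D : Finset ℝ := insert 0 ((Finset.univ.filter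
      (fun x => v x ≤ ((max (L x) (U x) : ℕ) : ℝ))).image (fun x => Int.fract (v x))) with hDdef
  have hDmem' : ∀ a : ℝ, a ∈ D ↔
      (a = 0 ∨ ∃ x, v x ≤ ((max (L x) (U x) : ℕ) : ℝ) ∧ Int.fract (v x) = a) := by
    intro a
    simp [hDdef]
  have hD0 : (0:ℝ) ∈ D := (hDmem' 0).mpr (Or.inl rfl)
  set h : ℝ → ℝ := fun a =>
    if ha : ∃ x, v x ≤ ((max (L x) (U x) : ℕ) : ℝ) ∧ Int.fract (v x) = a then
      Int.fract (w (Classical.choose ha))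
    else 0
    with hhdef
  have hkey : ∀ x, v x ≤ ((max (L x) (U x) : ℕ) : ℝ) →
      h (Int.fract (v x)) = Int.fract (w x) := by
    intro x hx
    have hex : ∃ y, v y ≤ ((max (L y) (U y) : ℕ) : ℝ) ∧ Int.fract (v y) = Int.fract (v x) :=
      ⟨x, hx, rfl⟩
    simp only [hhdef, dif_pos hex]
    obtain ⟨hy1, hy2⟩ := Classical.choose_spec hex
    have hni1 : ¬ Int.fract (w (Classical.choose hex)) < Int.fract (w x) := by
      rw [← hreg2 _ x hy1 hx, hy2]
      exact lt_irrefl _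
    have hni2 : ¬ Int.fract (w x) < Int.fract (w (Classical.choose hex)) := by
      rw [← hreg2 x _ hx hy1, hy2]
      exact lt_irrefl _
    linarith [le_of_not_gt hni1, le_of_not_gt hni2]
  have hh0 : h 0 = 0 := by
    by_cases hex : ∃ y, v y ≤ ((max (L y) (U y) : ℕ) : ℝ) ∧ Int.fract (v y) = (0:ℝ)
    · simp only [hhdef, dif_pos hex]
      obtain ⟨hy1, hy2⟩ := Classical.choose_spec hex
      exact (hfl _ hy1).2.mp hy2
    · simp only [hhdef, dif_neg hex]
  have hDbd : ∀ a ∈ D, 0 ≤ a ∧ a < 1 := by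
    intro a ha
    rcases (hDmem' a).mp ha with h' | ⟨x, _, hx2⟩
    · subst h'; exact ⟨le_refl _, one_pos⟩
    · rw [← hx2]; exact ⟨Int.fract_nonneg _, Int.fract_lt_one _⟩
  have hhbd : ∀ a ∈ D, 0 ≤ h a ∧ h a < 1 := by
    intro a ha
    rcases (hDmem' a).mp ha with h' | ⟨x, hx1, hx2⟩
    · subst h'; rw [hh0]; exact ⟨le_refl _, one_pos⟩
    · rw [← hx2, hkey x hx1]; exact ⟨Int.fract_nonneg _, Int.fract_lt_one _⟩
  have hhmono : ∀ a ∈ D, ∀ b ∈ D, a < b → h a < h b := by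
    intro a ha b hb hab
    rcases (hDmem' b).mp hb with hb' | ⟨y, hy1, hy2⟩
    · exfalso
      have := (hDbd a ha).1
      rw [hb'] at hab
      linarith
    · rcases (hDmem' a).mp ha with ha' | ⟨x, hx1, hx2⟩
      · subst ha'
        rw [hh0, ← hy2, hkey y hy1]
        apply hzero y hy1
        rw [hy2]
        exact hab
      · rw [← hx2, ← hy2, hkey x hx1, hkey y hy1]
        exact (hreg2 x y hx1 hy1).mp (by rw [hx2, hy2]; exact hab)
  obtain ⟨g, hgD, hgmono, hgbound⟩ := exists_interp D h hD0 hDbd hh0 hhbd hhmono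
  have g0 : g 0 = 0 := by rw [hgD 0 hD0, hh0]
  have giff : ∀ s t : ℝ, 0 ≤ s → s < 1 → 0 ≤ t → t < 1 → (s < t ↔ g s < g t) := by
    intro s t hs0 hs1 ht0 ht1
    constructor
    · exact hgmono s t hs0 hs1 ht0 ht1
    · intro hgt
      by_contra hcon
      push_neg at hcon
      rcases eq_or_lt_of_le hcon with h' | h'
      · rw [h'] at hgt; exact lt_irrefl _ hgt
      · have := hgmono t s ht0 ht1 hs0 hs1 h'
        linarith
  have hgpos : ∀ u : ℝ, u < 1 → 0 < u → 0 < g u := by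
    intro u h1 hp
    have := hgmono 0 u (le_refl _) one_pos (le_of_lt hp) h1 hp
    rwa [g0] at this
  set w' : X → ℝ := fun x => (⌊v' x⌋ : ℝ) + g (Int.fract (v' x)) with hw'def
  refine ⟨w', ?_, ?_⟩
  · -- w' ∈ Z
    intro cst hcst
    have hc := hv'Z cst hcst
    obtain ⟨i, j, b, c⟩ := cst
    have hrepv : ∀ o : Option X,
        o.elim (0:ℝ) v' = (⌊o.elim (0:ℝ) v'⌋ : ℝ) + Int.fract (o.elim (0:ℝ) v') :=
      fun o => (Int.floor_add_fract _).symm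
    have hrepw : ∀ o : Option X,
        o.elim (0:ℝ) w' = (⌊o.elim (0:ℝ) v'⌋ : ℝ) + g (Int.fract (o.elim (0:ℝ) v')) := by
      intro o
      cases o with
      | none => simp [Int.fract_zero, g0]
      | some x => rfl
    have htrans := csat_transfer ⌊j.elim (0:ℝ) v'⌋ ⌊i.elim (0:ℝ) v'⌋ c
      (Int.fract (j.elim (0:ℝ) v')) (Int.fract (i.elim (0:ℝ) v'))
      (g (Int.fract (j.elim (0:ℝ) v'))) (g (Int.fract (i.elim (0:ℝ) v')))
      (Int.fract_nonneg _) (Int.fract_lt_one _) (Int.fract_nonneg _) (Int.fract_lt_one _)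
      (hgbound _ (Int.fract_nonneg _) (Int.fract_lt_one _)).1
      (hgbound _ (Int.fract_nonneg _) (Int.fract_lt_one _)).2
      (hgbound _ (Int.fract_nonneg _) (Int.fract_lt_one _)).1
      (hgbound _ (Int.fract_nonneg _) (Int.fract_lt_one _)).2
      (giff _ _ (Int.fract_nonneg _) (Int.fract_lt_one _) (Int.fract_nonneg _) (Int.fract_lt_one _))
      (giff _ _ (Int.fract_nonneg _) (Int.fract_lt_one _) (Int.fract_nonneg _) (Int.fract_lt_one _))
    cases b
    · rw [csat_false'] at hc ⊢
      rw [hrepw j, hrepw i]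
      rw [hrepv j, hrepv i] at hc
      exact htrans.1 hc
    · rw [csat_true'] at hc ⊢
      rw [hrepw j, hrepw i]
      rw [hrepv j, hrepv i] at hc
      exact htrans.2 hc
  · -- simLU L U w w'
    intro x
    have hw'x : w' x = (⌊v' x⌋ : ℝ) + g (Int.fract (v' x)) := rfl
    have hv'x : v' x = (⌊v' x⌋ : ℝ) + Int.fract (v' x) := (Int.floor_add_fract _).symm
    have hvx : v x = (⌊v x⌋ : ℝ) + Int.fract (v x) := (Int.floor_add_fract _).symm
    have hgv'bd := hgbound (Int.fract (v' x)) (Int.fract_nonneg _) (Int.fract_lt_one _)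
    by_cases hxα : v x ≤ ((max (L x) (U x) : ℕ) : ℝ)
    · have hfrD : Int.fract (v x) ∈ D := (hDmem' _).mpr (Or.inr ⟨x, hxα, rfl⟩)
      have hgvbd := hgbound (Int.fract (v x)) (Int.fract_nonneg _) (Int.fract_lt_one _)
      have hwx : w x = (⌊v x⌋ : ℝ) + g (Int.fract (v x)) := by
        rw [hgD _ hfrD, hkey x hxα, (hfl x hxα).1, Int.floor_add_fract]
      rcases lt_trichotomy (v' x) (v x) with hlt | heq | hgt
      · have hL : (L x : ℝ) < v' x := (hsim x).1 hlt
        have hww : w' x < w x := by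
          rw [hw'x, hwx]
          exact lex_lt_transfer ⌊v' x⌋ ⌊v x⌋ (Int.fract (v' x)) (Int.fract (v x))
            (g (Int.fract (v' x))) (g (Int.fract (v x)))
            (Int.fract_nonneg _) (Int.fract_lt_one _)
            hgv'bd.1 hgv'bd.2 hgvbd.1 hgvbd.2
            (fun hf => (giff _ _ (Int.fract_nonneg _) (Int.fract_lt_one _)
              (Int.fract_nonneg _) (Int.fract_lt_one _)).mp hf)
            (by rw [← hv'x, ← hvx]; exact hlt)
        have hLw : (L x : ℝ) < w' x := by
          rw [hw'x]
          have := int_lt_transfer (L x : ℤ) ⌊v' x⌋ (Int.fract (v' x)) (g (Int.fract (v' x)))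
            (Int.fract_lt_one _) hgv'bd.1
            (fun hp => hgpos _ (Int.fract_lt_one _) hp)
            (by rw [← hv'x]; exact_mod_cast hL)
          exact_mod_cast this
        exact ⟨fun _ => hLw, fun hcon => absurd hcon (not_lt.mpr (le_of_lt hww))⟩
      · have heqw : w' x = w x := by rw [hw'x, heq, ← hwx]
        constructor <;> intro hcon <;> rw [heqw] at hcon <;> exact absurd hcon (lt_irrefl _)
      · have hU : (U x : ℝ) < v x := (hsim x).2 hgt
        have hww : w x < w' x := by
          rw [hw'x, hwx]
          exact lex_lt_transfer ⌊v x⌋ ⌊v' x⌋ (Int.fract (v x)) (Int.fract (v' x))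
            (g (Int.fract (v x))) (g (Int.fract (v' x)))
            (Int.fract_nonneg _) (Int.fract_lt_one _)
            hgvbd.1 hgvbd.2 hgv'bd.1 hgv'bd.2
            (fun hf => (giff _ _ (Int.fract_nonneg _) (Int.fract_lt_one _)
              (Int.fract_nonneg _) (Int.fract_lt_one _)).mp hf)
            (by rw [← hv'x, ← hvx]; exact hgt)
        have hUw : (U x : ℝ) < w x := by
          rw [hwx]
          have := int_lt_transfer (U x : ℤ) ⌊v x⌋ (Int.fract (v x)) (g (Int.fract (v x)))
            (Int.fract_lt_one _) hgvbd.1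
            (fun hp => hgpos _ (Int.fract_lt_one _) hp)
            (by rw [← hvx]; exact_mod_cast hU)
          exact_mod_cast this
        exact ⟨fun hcon => absurd hcon (not_lt.mpr (le_of_lt hww)), fun _ => hUw⟩
    · push_neg at hxα
      have hLle : (L x : ℝ) ≤ ((max (L x) (U x) : ℕ) : ℝ) := by
        exact_mod_cast Nat.cast_le.mpr (le_max_left (L x) (U x))
      have hUle : (U x : ℝ) ≤ ((max (L x) (U x) : ℕ) : ℝ) := by
        exact_mod_cast Nat.cast_le.mpr (le_max_right (L x) (U x))
      have hwgt : ((max (L x) (U x) : ℕ) : ℝ) < w x := by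
        rcases hreg1 x with ⟨_, h2⟩ | ⟨hf, hz⟩
        · exact h2
        · have hzz : 0 < Int.fract (v x) → 0 < Int.fract (w x) := by
            intro hp
            rcases lt_or_eq_of_le (Int.fract_nonneg (w x)) with h' | h'
            · exact h'
            · exfalso
              have := hz.mpr h'.symm
              linarith
          have := int_lt_transfer ((max (L x) (U x) : ℕ) : ℤ) ⌊v x⌋
            (Int.fract (v x)) (Int.fract (w x))
            (Int.fract_lt_one _) (Int.fract_nonneg _) hzz
            (by rw [← hvx]; exact_mod_cast hxα)
          rw [hf, Int.floor_add_fract] at this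
          exact_mod_cast this
      have hLv' : (L x : ℝ) < v' x := by
        rcases le_or_gt (v x) (v' x) with h' | h'
        · linarith
        · exact (hsim x).1 h'
      have hLw' : (L x : ℝ) < w' x := by
        rw [hw'x]
        have := int_lt_transfer (L x : ℤ) ⌊v' x⌋ (Int.fract (v' x)) (g (Int.fract (v' x)))
          (Int.fract_lt_one _) hgv'bd.1
          (fun hp => hgpos _ (Int.fract_lt_one _) hp)
          (by rw [← hv'x]; exact_mod_cast hLv')
        exact_mod_cast this
      exact ⟨fun _ => hLw', fun _ => by linarith⟩
end

section
/- For a region R and a zone Z: R ⊆ a_LU(Z) if and only if a_LU⁻¹(R) ∩ Z ≠ ∅, where a_LU⁻¹(R) = {v' : ∃ v ∈ R, v ⊑_LU v'}. -/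
/-- a_LU⁻¹(W) = {v' : ∃ v ∈ W, v ⊑_LU v'}. -/
def aLUinv {X : Type*} (L U : X → ℕ) (W : Set (X → ℝ)) : Set (X → ℝ) :=
  {v' | ∃ v ∈ W, simLU L U v v'}

section Helpers

lemma lt_lex (a b : ℝ) :
    a < b ↔ ⌊a⌋ < ⌊b⌋ ∨ (⌊a⌋ = ⌊b⌋ ∧ Int.fract a < Int.fract b) := by
  have ha := Int.floor_add_fract a
  have hb := Int.floor_add_fract b
  have ha1 := Int.fract_nonneg a; have ha2 := Int.fract_lt_one a
  have hb1 := Int.fract_nonneg b; have hb2 := Int.fract_lt_one b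
  constructor
  · intro h
    rcases lt_trichotomy ⌊a⌋ ⌊b⌋ with h1 | h1 | h1
    · exact Or.inl h1
    · refine Or.inr ⟨h1, ?_⟩
      have h1' : ((⌊a⌋ : ℝ)) = ⌊b⌋ := by exact_mod_cast h1
      linarith
    · exfalso
      have h1' : (⌊b⌋ : ℝ) + 1 ≤ ⌊a⌋ := by exact_mod_cast h1
      linarith
  · rintro (h | ⟨h1, h2⟩)
    · have h' : (⌊a⌋ : ℝ) + 1 ≤ ⌊b⌋ := by exact_mod_cast h
      linarith
    · have h1' : ((⌊a⌋ : ℝ)) = ⌊b⌋ := by exact_mod_cast h1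
      linarith

lemma le_int_lex (a : ℝ) (n : ℤ) :
    a ≤ (n : ℝ) ↔ ⌊a⌋ < n ∨ (⌊a⌋ = n ∧ Int.fract a = 0) := by
  have ha := Int.floor_add_fract a
  have ha1 := Int.fract_nonneg a; have ha2 := Int.fract_lt_one a
  constructor
  · intro h
    have h1 : ⌊a⌋ ≤ n := by
      have := Int.floor_le_floor h
      rwa [Int.floor_intCast] at this
    rcases h1.lt_or_eq with h2 | h2
    · exact Or.inl h2
    · refine Or.inr ⟨h2, ?_⟩
      have h2' : ((⌊a⌋ : ℝ)) = n := by exact_mod_cast h2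
      linarith
  · rintro (h | ⟨h1, h2⟩)
    · have h' : (⌊a⌋ : ℝ) + 1 ≤ n := by exact_mod_cast h
      linarith
    · have h1' : ((⌊a⌋ : ℝ)) = n := by exact_mod_cast h1
      linarith

lemma int_le_transfer {a b : ℝ} (hf : ⌊a⌋ = ⌊b⌋)
    (hz : Int.fract a = 0 ↔ Int.fract b = 0) (n : ℤ) :
    a ≤ (n : ℝ) ↔ b ≤ (n : ℝ) := by
  rw [le_int_lex, le_int_lex, hf, hz]

lemma int_lt_transfer_s11 {a b : ℝ} (hf : ⌊a⌋ = ⌊b⌋)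
    (hz : Int.fract a = 0 ↔ Int.fract b = 0) (n : ℤ) :
    (n : ℝ) < a ↔ (n : ℝ) < b := by
  rw [← not_le, ← not_le, int_le_transfer hf hz]

lemma sub_lt_intCast (a b : ℝ) (c : ℤ) :
    b - a < (c : ℝ) ↔ (⌊b⌋ - ⌊a⌋ < c ∨ (⌊b⌋ - ⌊a⌋ = c ∧ Int.fract b < Int.fract a)) := by
  have ha := Int.floor_add_fract a
  have hb := Int.floor_add_fract b
  have ha1 := Int.fract_nonneg a; have ha2 := Int.fract_lt_one a
  have hb1 := Int.fract_nonneg b; have hb2 := Int.fract_lt_one b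
  constructor
  · intro h
    rcases lt_trichotomy (⌊b⌋ - ⌊a⌋) c with h1 | h1 | h1
    · exact Or.inl h1
    · refine Or.inr ⟨h1, ?_⟩
      have h1' : ((⌊b⌋ : ℝ)) - ⌊a⌋ = c := by exact_mod_cast h1
      linarith
    · exfalso
      have h1' : (c : ℝ) + 1 ≤ (⌊b⌋ : ℝ) - ⌊a⌋ := by exact_mod_cast h1
      linarith
  · rintro (h | ⟨h1, h2⟩)
    · have h' : (⌊b⌋ : ℝ) - ⌊a⌋ + 1 ≤ c := by exact_mod_cast h
      linarith
    · have h1' : ((⌊b⌋ : ℝ)) - ⌊a⌋ = c := by exact_mod_cast h1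
      linarith

lemma sub_le_intCast (a b : ℝ) (c : ℤ) :
    b - a ≤ (c : ℝ) ↔ (⌊b⌋ - ⌊a⌋ < c ∨ (⌊b⌋ - ⌊a⌋ = c ∧ Int.fract b ≤ Int.fract a)) := by
  have ha := Int.floor_add_fract a
  have hb := Int.floor_add_fract b
  have ha1 := Int.fract_nonneg a; have ha2 := Int.fract_lt_one a
  have hb1 := Int.fract_nonneg b; have hb2 := Int.fract_lt_one b
  constructor
  · intro h
    rcases lt_trichotomy (⌊b⌋ - ⌊a⌋) c with h1 | h1 | h1
    · exact Or.inl h1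
    · refine Or.inr ⟨h1, ?_⟩
      have h1' : ((⌊b⌋ : ℝ)) - ⌊a⌋ = c := by exact_mod_cast h1
      linarith
    · exfalso
      have h1' : (c : ℝ) + 1 ≤ (⌊b⌋ : ℝ) - ⌊a⌋ := by exact_mod_cast h1
      linarith
  · rintro (h | ⟨h1, h2⟩)
    · have h' : (⌊b⌋ : ℝ) - ⌊a⌋ + 1 ≤ c := by exact_mod_cast h
      linarith
    · have h1' : ((⌊b⌋ : ℝ)) - ⌊a⌋ = c := by exact_mod_cast h1
      linarith

lemma exists_phi (A : Set ℝ) (hfin : A.Finite) (g : ℝ → ℝ)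
    (hA0 : (0 : ℝ) ∈ A) (hA : ∀ a ∈ A, 0 ≤ a ∧ a < 1)
    (hg : ∀ a ∈ A, 0 ≤ g a ∧ g a < 1)
    (hmono : ∀ a ∈ A, ∀ b ∈ A, a < b → g a < g b) :
    ∃ φ : ℝ → ℝ, (∀ a ∈ A, φ a = g a) ∧ (∀ t, 0 ≤ t → t < 1 → 0 ≤ φ t ∧ φ t < 1) ∧
      (∀ s t, 0 ≤ s → s < t → t < 1 → φ s < φ t) := by
  classical
  set aL : ℝ → ℝ := fun t => sSup {s | s ∈ A ∧ s ≤ t} with haL_def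
  set bU : ℝ → ℝ := fun t => sInf (insert 1 {s | s ∈ A ∧ t < s}) with hbU_def
  set G : ℝ → ℝ := fun s => if s = 1 then 1 else g s with hG_def
  set φ : ℝ → ℝ := fun t => if t ∈ A then g t else
    g (aL t) + ((t - aL t) / (bU t - aL t)) * (G (bU t) - g (aL t)) with hφ_def
  have hgmono' : ∀ a ∈ A, ∀ b ∈ A, a ≤ b → g a ≤ g b := by
    intro a ha b hb hab
    rcases hab.lt_or_eq with h | h
    · exact (hmono a ha b hb h).le
    · rw [h]
  have haL_mem : ∀ t : ℝ, 0 ≤ t → aL t ∈ A ∧ aL t ≤ t := by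
    intro t ht
    have hne : {s | s ∈ A ∧ s ≤ t}.Nonempty := ⟨0, hA0, ht⟩
    have hf : {s | s ∈ A ∧ s ≤ t}.Finite := hfin.subset (fun s hs => hs.1)
    exact hne.csSup_mem hf
  have haL_ub : ∀ t : ℝ, ∀ s ∈ A, s ≤ t → s ≤ aL t := by
    intro t s hs hst
    have hf : {s | s ∈ A ∧ s ≤ t}.Finite := hfin.subset (fun s hs => hs.1)
    exact le_csSup hf.bddAbove ⟨hs, hst⟩
  have hbU_mem : ∀ t : ℝ, bU t ∈ insert (1:ℝ) {s | s ∈ A ∧ t < s} := by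
    intro t
    have hne : (insert (1:ℝ) {s | s ∈ A ∧ t < s}).Nonempty := ⟨1, Set.mem_insert _ _⟩
    have hf : (insert (1:ℝ) {s | s ∈ A ∧ t < s}).Finite :=
      (hfin.subset (fun s hs => hs.1)).insert 1
    exact hne.csInf_mem hf
  have hbU_lb : ∀ t : ℝ, ∀ s ∈ A, t < s → bU t ≤ s := by
    intro t s hs hts
    have hf : (insert (1:ℝ) {s | s ∈ A ∧ t < s}).Finite :=
      (hfin.subset (fun s hs => hs.1)).insert 1
    exact csInf_le hf.bddBelow (Set.mem_insert_of_mem _ ⟨hs, hts⟩)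
  have ht_lt_bU : ∀ t : ℝ, t < 1 → t < bU t := by
    intro t ht
    rcases hbU_mem t with h | h
    · rw [h]; exact ht
    · exact h.2
  have hcell : ∀ t : ℝ, 0 ≤ t → t < 1 →
      g (aL t) ≤ φ t ∧ φ t < G (bU t) ∧ G (bU t) ≤ 1 ∧ 0 ≤ g (aL t) := by
    intro t ht0 ht1
    obtain ⟨haA, haLe⟩ := haL_mem t ht0
    have hga0 : 0 ≤ g (aL t) := (hg _ haA).1
    have hgaGb : g (aL t) < G (bU t) ∧ G (bU t) ≤ 1 := by
      rcases hbU_mem t with h | h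
      · rw [h]
        simp only [hG_def, if_pos rfl]
        exact ⟨(hg _ haA).2, le_refl _⟩
      · have hne1 : bU t ≠ 1 := fun hc => absurd ((hA _ h.1).2) (by rw [hc]; exact lt_irrefl _)
        simp only [hG_def, if_neg hne1]
        constructor
        · exact hmono _ haA _ h.1 (lt_of_le_of_lt haLe h.2)
        · exact (hg _ h.1).2.le
    by_cases hmem : t ∈ A
    · have haeq : aL t = t := le_antisymm haLe (haL_ub t t hmem (le_refl t))
      have hφt : φ t = g (aL t) := by
        simp only [hφ_def, if_pos hmem]; rw [haeq]
      exact ⟨hφt.ge, by rw [hφt]; exact hgaGb.1, hgaGb.2, hga0⟩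
    · have halt : aL t < t := lt_of_le_of_ne haLe (fun hc => hmem (hc ▸ haA))
      have hbgt : t < bU t := ht_lt_bU t ht1
      have hd : 0 < bU t - aL t := by linarith
      have hr0 : 0 < (t - aL t) / (bU t - aL t) := div_pos (by linarith) hd
      have hr1 : (t - aL t) / (bU t - aL t) < 1 := (div_lt_one hd).mpr (by linarith)
      have hE : 0 < G (bU t) - g (aL t) := by linarith [hgaGb.1]
      have hφt : φ t = g (aL t) + ((t - aL t) / (bU t - aL t)) * (G (bU t) - g (aL t)) := by
        simp only [hφ_def, if_neg hmem]
      refine ⟨?_, ?_, hgaGb.2, hga0⟩ <;> rw [hφt] <;> nlinarith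
  refine ⟨φ, ?_, ?_, ?_⟩
  · intro a haA; simp only [hφ_def, if_pos haA]
  · intro t ht0 ht1
    obtain ⟨h1, h2, h3, h4⟩ := hcell t ht0 ht1
    exact ⟨le_trans h4 h1, lt_of_lt_of_le h2 h3⟩
  · intro s t hs0 hst ht1
    have hs1 : s < 1 := hst.trans ht1
    have ht0 : (0:ℝ) ≤ t := le_of_lt (lt_of_le_of_lt hs0 hst)
    obtain ⟨hsA, hsLe⟩ := haL_mem s hs0
    obtain ⟨htA, htLe⟩ := haL_mem t ht0
    by_cases hc : aL t ≤ s
    · have h1 : aL s = aL t :=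
        le_antisymm (haL_ub t _ hsA (hsLe.trans hst.le)) (haL_ub s _ htA hc)
      have h2 : bU s = bU t := by
        have hle : bU s ≤ bU t := by
          rcases hbU_mem t with h | h
          · rw [h]
            rcases hbU_mem s with h' | h'
            · rw [h']
            · exact (hA _ h'.1).2.le
          · exact hbU_lb s _ h.1 (lt_trans hst h.2)
        have hge : bU t ≤ bU s := by
          rcases hbU_mem s with h | h
          · rw [h]
            rcases hbU_mem t with h' | h'
            · rw [h']
            · exact (hA _ h'.1).2.le
          · have htbUs : t < bU s := by
              by_contra hcon
              push_neg at hcon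
              have : bU s ≤ aL t := haL_ub t _ h.1 hcon
              linarith [h.2]
            exact hbU_lb t _ h.1 htbUs
        exact le_antisymm hle hge
      have htnA : t ∉ A := by
        intro hmem
        have : t ≤ aL t := haL_ub t t hmem (le_refl t)
        linarith
      have hbgt : t < bU t := ht_lt_bU t ht1
      have hd : 0 < bU t - aL t := by linarith [hc]
      have hE : 0 < G (bU t) - g (aL t) := by
        obtain ⟨h1', h2', _, _⟩ := hcell t ht0 ht1
        linarith
      by_cases hsmem : s ∈ A
      · have hseq : aL t = s := le_antisymm hc (h1 ▸ haL_ub s s hsmem (le_refl s))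
        have hφs : φ s = g (aL t) := by
          simp only [hφ_def, if_pos hsmem, hseq]
        rw [hφs]
        simp only [hφ_def, if_neg htnA]
        have hr0 : 0 < (t - aL t) / (bU t - aL t) := div_pos (by linarith) hd
        nlinarith
      · simp only [hφ_def, if_neg hsmem, if_neg htnA, h1, h2]
        have hnum : (s - aL t) / (bU t - aL t) < (t - aL t) / (bU t - aL t) := by
          gcongr <;> linarith
        nlinarith [hnum]
    · push_neg at hc
      have hbsA : bU s ∈ A ∧ s < bU s := by
        rcases hbU_mem s with h | h
        · exfalso
          have : bU s ≤ aL t := hbU_lb s _ htA hc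
          rw [h] at this
          linarith [(hA _ htA).2]
        · exact h
      have h1 : bU s ≤ aL t := hbU_lb s _ htA hc
      have hne1 : bU s ≠ 1 := fun hcon => absurd ((hA _ hbsA.1).2) (by rw [hcon]; exact lt_irrefl _)
      have h3 : φ s < G (bU s) := (hcell s hs0 hs1).2.1
      have h3' : G (bU s) = g (bU s) := by simp only [hG_def, if_neg hne1]
      have h4 : g (bU s) ≤ g (aL t) := hgmono' _ hbsA.1 _ htA h1
      have h5 : g (aL t) ≤ φ t := (hcell t ht0 ht1).1
      linarith

lemma csat_transfer_s11 {X : Type*} {v' w' : X → ℝ}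
    (hfl : ∀ x, ⌊w' x⌋ = ⌊v' x⌋)
    (hfz : ∀ x, (Int.fract (w' x) = 0 ↔ Int.fract (v' x) = 0))
    (hflt : ∀ x y, Int.fract (w' x) < Int.fract (w' y) ↔ Int.fract (v' x) < Int.fract (v' y))
    (cst : Option X × Option X × Bool × ℤ) (h : csat v' cst) : csat w' cst := by
  obtain ⟨i, j, strict, c⟩ := cst
  have hefl : ∀ o : Option X, ⌊(o.elim 0 w' : ℝ)⌋ = ⌊(o.elim 0 v' : ℝ)⌋ := by
    rintro (_ | x) <;> simp [hfl]
  have heflt : ∀ o o' : Option X,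
      (Int.fract (o.elim 0 w' : ℝ) < Int.fract (o'.elim 0 w' : ℝ) ↔
        Int.fract (o.elim 0 v' : ℝ) < Int.fract (o'.elim 0 v' : ℝ)) := by
    have hpos : ∀ u : X → ℝ, ∀ y, ((0:ℝ) < Int.fract (u y) ↔ ¬ Int.fract (u y) = 0) := by
      intro u y
      constructor
      · intro h1 h2; rw [h2] at h1; exact lt_irrefl _ h1
      · intro h1; exact lt_of_le_of_ne (Int.fract_nonneg _) (Ne.symm h1)
    rintro (_ | x) (_ | y)
    · simp
    · simp only [Option.elim_none, Option.elim_some, Int.fract_zero]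
      rw [hpos w' y, hpos v' y, hfz y]
    · simp only [Option.elim_none, Option.elim_some, Int.fract_zero]
      simp [(Int.fract_nonneg _).not_gt]
    · exact hflt x y
  cases strict
  · simp only [csat, if_neg (Bool.false_ne_true)] at h ⊢
    rw [sub_le_intCast] at h ⊢
    rcases h with h | ⟨h1, h2⟩
    · left; rw [hefl, hefl]; exact h
    · right
      refine ⟨by rw [hefl, hefl]; exact h1, ?_⟩
      rw [← not_lt] at h2 ⊢
      exact fun hc => h2 ((heflt _ _).mp hc)
  · simp only [csat, if_pos rfl] at h ⊢
    rw [sub_lt_intCast] at h ⊢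
    rcases h with h | ⟨h1, h2⟩
    · left; rw [hefl, hefl]; exact h
    · right
      exact ⟨by rw [hefl, hefl]; exact h1, (heflt _ _).mpr h2⟩

/-- The key construction: if `w` is region-equivalent to `v` (w.r.t. α = max(L,U)) and
`v ⊑ v'`, then there is `w'` with `w ⊑ w'` lying in the same "unbounded region" as `v'`. -/
lemma key_construction {X : Type*} [Fintype X] (L U : X → ℕ) (v w v' : X → ℝ)
    (heq1 : ∀ x, (((max (L x) (U x) : ℕ) : ℝ) < v x ∧ ((max (L x) (U x) : ℕ) : ℝ) < w x) ∨
      (⌊v x⌋ = ⌊w x⌋ ∧ (Int.fract (v x) = 0 ↔ Int.fract (w x) = 0)))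
    (heq2 : ∀ x y, v x ≤ ((max (L x) (U x) : ℕ) : ℝ) → v y ≤ ((max (L y) (U y) : ℕ) : ℝ) →
      (Int.fract (v x) < Int.fract (v y) ↔ Int.fract (w x) < Int.fract (w y)))
    (hsim : simLU L U v v') :
    ∃ w', simLU L U w w' ∧ (∀ x, ⌊w' x⌋ = ⌊v' x⌋) ∧
      (∀ x, Int.fract (w' x) = 0 ↔ Int.fract (v' x) = 0) ∧
      (∀ x y, Int.fract (w' x) < Int.fract (w' y) ↔ Int.fract (v' x) < Int.fract (v' y)) := by
  classical
  set α : X → ℝ := fun x => ((max (L x) (U x) : ℕ) : ℝ) with hα_def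
  -- facts for bounded clocks
  have hbd : ∀ x, v x ≤ α x → ⌊v x⌋ = ⌊w x⌋ ∧ (Int.fract (v x) = 0 ↔ Int.fract (w x) = 0) := by
    intro x hx
    rcases heq1 x with ⟨h1, _⟩ | h
    · exact absurd hx (not_le.mpr h1)
    · exact h
  -- the finite set of fractional parts of bounded clocks, and the rescaling map g
  set A : Set ℝ := insert 0 ((fun x => Int.fract (v x)) '' {x | v x ≤ α x}) with hA_def
  set g : ℝ → ℝ :=
    fun a => sSup ((fun x => Int.fract (w x)) '' {x | v x ≤ α x ∧ Int.fract (v x) = a})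
    with hg_def
  have hfin : A.Finite := (Set.toFinite _).image _ |>.insert 0
  have hA0 : (0 : ℝ) ∈ A := Set.mem_insert _ _
  have hAb : ∀ a ∈ A, 0 ≤ a ∧ a < 1 := by
    rintro a (rfl | ⟨x, hx, rfl⟩)
    · exact ⟨le_refl _, one_pos⟩
    · exact ⟨Int.fract_nonneg _, Int.fract_lt_one _⟩
  have hgval : ∀ x, v x ≤ α x → g (Int.fract (v x)) = Int.fract (w x) := by
    intro x hx
    have hset : ((fun y => Int.fract (w y)) ''
        {y | v y ≤ α y ∧ Int.fract (v y) = Int.fract (v x)}) = {Int.fract (w x)} := by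
      apply Set.eq_singleton_iff_unique_mem.mpr
      refine ⟨⟨x, ⟨hx, rfl⟩, rfl⟩, ?_⟩
      rintro r ⟨y, ⟨hy, hfy⟩, rfl⟩
      show Int.fract (w y) = Int.fract (w x)
      have h1 : ¬ Int.fract (w y) < Int.fract (w x) := by
        intro hcon
        have := (heq2 y x hy hx).mpr hcon
        rw [hfy] at this
        exact lt_irrefl _ this
      have h2 : ¬ Int.fract (w x) < Int.fract (w y) := by
        intro hcon
        have := (heq2 x y hx hy).mpr hcon
        rw [hfy] at this
        exact lt_irrefl _ this
      exact le_antisymm (not_lt.mp h2) (not_lt.mp h1)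
    rw [hg_def]
    simp only []
    rw [hset, csSup_singleton]
  have hg0 : g 0 = 0 := by
    have hsub : ((fun y => Int.fract (w y)) '' {y | v y ≤ α y ∧ Int.fract (v y) = 0}) ⊆ {0} := by
      rintro r ⟨y, ⟨hy, hfy⟩, rfl⟩
      exact (hbd y hy).2.mp hfy
    rw [hg_def]
    simp only []
    rcases Set.subset_singleton_iff_eq.mp hsub with h | h
    · rw [h]; exact Real.sSup_empty
    · rw [h]; exact csSup_singleton _
  have hgb : ∀ a ∈ A, 0 ≤ g a ∧ g a < 1 := by
    rintro a (rfl | ⟨x, hx, rfl⟩)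
    · rw [hg0]; exact ⟨le_refl _, one_pos⟩
    · rw [hgval x hx]; exact ⟨Int.fract_nonneg _, Int.fract_lt_one _⟩
  have hgmono : ∀ a ∈ A, ∀ b ∈ A, a < b → g a < g b := by
    rintro a ha b hb hab
    rcases hb with rfl | ⟨y, hy, rfl⟩
    · exact absurd hab (not_lt.mpr (hAb a ha).1)
    · rw [hgval y hy]
      rcases ha with rfl | ⟨x, hx, rfl⟩
      · rw [hg0]
        have hab' : (0:ℝ) < Int.fract (v y) := hab
        have hvy : Int.fract (v y) ≠ 0 := by
          intro hc; rw [hc] at hab'; exact lt_irrefl _ hab'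
        have hwy : Int.fract (w y) ≠ 0 := fun hc => hvy ((hbd y hy).2.mpr hc)
        exact lt_of_le_of_ne (Int.fract_nonneg _) (Ne.symm hwy)
      · rw [hgval x hx]
        exact (heq2 x y hx hy).mp hab
  obtain ⟨φ, hφA, hφmem, hφmono⟩ := exists_phi A hfin g hA0 hAb hgb hgmono
  have hφ0 : φ 0 = 0 := by rw [hφA 0 hA0]; exact hg0
  have hφlt : ∀ s t : ℝ, 0 ≤ s → s < 1 → 0 ≤ t → t < 1 → (φ s < φ t ↔ s < t) := by
    intro s t hs0 hs1 ht0 ht1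
    constructor
    · intro h
      by_contra hcon
      push_neg at hcon
      rcases hcon.lt_or_eq with h' | h'
      · exact absurd (hφmono t s ht0 h' hs1) (not_lt.mpr h.le)
      · rw [h'] at h; exact lt_irrefl _ h
    · intro h; exact hφmono s t hs0 h ht1
  have hφzero : ∀ t : ℝ, 0 ≤ t → t < 1 → (φ t = 0 ↔ t = 0) := by
    intro t ht0 ht1
    constructor
    · intro h
      by_contra hc
      have h0t : 0 < t := lt_of_le_of_ne ht0 (Ne.symm hc)
      have := hφmono 0 t (le_refl _) h0t ht1
      rw [hφ0, h] at this
      exact lt_irrefl _ this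
    · rintro rfl; exact hφ0
  -- the witness
  set w' : X → ℝ := fun x => (⌊v' x⌋ : ℝ) + φ (Int.fract (v' x)) with hw'_def
  have hmemx : ∀ x, 0 ≤ φ (Int.fract (v' x)) ∧ φ (Int.fract (v' x)) < 1 :=
    fun x => hφmem _ (Int.fract_nonneg _) (Int.fract_lt_one _)
  have hfr : ∀ x, Int.fract (w' x) = φ (Int.fract (v' x)) := by
    intro x
    rw [hw'_def]
    simp only []
    rw [Int.fract_intCast_add]
    exact Int.fract_eq_self.mpr ⟨(hmemx x).1, (hmemx x).2⟩
  have hflw : ∀ x, ⌊w' x⌋ = ⌊v' x⌋ := by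
    intro x
    rw [hw'_def]
    simp only []
    rw [Int.floor_intCast_add]
    have : ⌊φ (Int.fract (v' x))⌋ = 0 :=
      Int.floor_eq_zero_iff.mpr ⟨(hmemx x).1, (hmemx x).2⟩
    rw [this, add_zero]
  have hQ3 : ∀ x, Int.fract (w' x) = 0 ↔ Int.fract (v' x) = 0 := by
    intro x
    rw [hfr x]
    exact (hφzero _ (Int.fract_nonneg _) (Int.fract_lt_one _)).trans
      ⟨fun h => h, fun h => h⟩
  have hQ2 : ∀ x y, Int.fract (w' x) < Int.fract (w' y) ↔ Int.fract (v' x) < Int.fract (v' y) := by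
    intro x y
    rw [hfr x, hfr y]
    exact hφlt _ _ (Int.fract_nonneg _) (Int.fract_lt_one _) (Int.fract_nonneg _)
      (Int.fract_lt_one _)
  -- fract of w on bounded clocks is φ of fract of v
  have hfw : ∀ x, v x ≤ α x → Int.fract (w x) = φ (Int.fract (v x)) := by
    intro x hx
    have hmem : Int.fract (v x) ∈ A := Set.mem_insert_of_mem _ ⟨x, hx, rfl⟩
    rw [hφA _ hmem, hgval x hx]
  -- L-transfer: L < v' x implies L < w' x
  have hLW : ∀ x, (L x : ℝ) < v' x → (L x : ℝ) < w' x := by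
    intro x h
    have := (int_lt_transfer_s11 (hflw x).symm (hQ3 x).symm ((L x : ℕ) : ℤ)).mp
      (by exact_mod_cast h)
    exact_mod_cast this
  refine ⟨w', ?_, hflw, hQ3, hQ2⟩
  intro x
  have hLle : (L x : ℝ) ≤ α x := by
    show (L x : ℝ) ≤ ((max (L x) (U x) : ℕ) : ℝ)
    exact_mod_cast le_max_left (L x) (U x)
  have hUle : (U x : ℝ) ≤ α x := by
    show (U x : ℝ) ≤ ((max (L x) (U x) : ℕ) : ℝ)
    exact_mod_cast le_max_right (L x) (U x)
  by_cases hx : v x ≤ α x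
  · -- bounded clock
    obtain ⟨hfvw, hzvw⟩ := hbd x hx
    have hcmp1 : w' x < w x ↔ v' x < v x := by
      rw [lt_lex (w' x) (w x), lt_lex (v' x) (v x), hflw x, ← hfvw, hfr x, hfw x hx]
      have hiff : (φ (Int.fract (v' x)) < φ (Int.fract (v x))) ↔
          Int.fract (v' x) < Int.fract (v x) :=
        hφlt _ _ (Int.fract_nonneg _) (Int.fract_lt_one _) (Int.fract_nonneg _)
          (Int.fract_lt_one _)
      rw [hiff]
    have hcmp2 : w x < w' x ↔ v x < v' x := by
      rw [lt_lex (w x) (w' x), lt_lex (v x) (v' x), hflw x, ← hfvw, hfr x, hfw x hx]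
      have hiff : (φ (Int.fract (v x)) < φ (Int.fract (v' x))) ↔
          Int.fract (v x) < Int.fract (v' x) :=
        hφlt _ _ (Int.fract_nonneg _) (Int.fract_lt_one _) (Int.fract_nonneg _)
          (Int.fract_lt_one _)
      rw [hiff]
    constructor
    · intro h
      exact hLW x ((hsim x).1 (hcmp1.mp h))
    · intro h
      have hUv : (U x : ℝ) < v x := (hsim x).2 (hcmp2.mp h)
      have := (int_lt_transfer_s11 hfvw hzvw ((U x : ℕ) : ℤ)).mp (by exact_mod_cast hUv)
      exact_mod_cast this
  · -- unbounded clock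
    push_neg at hx
    have hαw : α x < w x := by
      rcases heq1 x with ⟨_, h⟩ | ⟨hf, hz⟩
      · exact h
      · have hx' : ((max (L x) (U x) : ℕ) : ℝ) < v x := hx
        have := (int_lt_transfer_s11 hf hz ((max (L x) (U x) : ℕ) : ℤ)).mp
          (by exact_mod_cast hx')
        show ((max (L x) (U x) : ℕ) : ℝ) < w x
        exact_mod_cast this
    constructor
    · intro h
      apply hLW
      by_cases hvv : v' x < v x
      · exact (hsim x).1 hvv
      · push_neg at hvv
        calc (L x : ℝ) ≤ α x := hLle
          _ < v x := hx
          _ ≤ v' x := hvv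
    · intro h
      linarith

end Helpers

/-- For a region R and a zone Z: R ⊆ a_LU(Z) iff a_LU⁻¹(R) ∩ Z ≠ ∅.
Here R is the region (equivalence class w.r.t. bounds α(x) = max(L(x),U(x)))
of some nonnegative valuation v₀. -/
theorem region_incl_aLU_iff {X : Type*} [Fintype X] (L U : X → ℕ)
    (Z : Set (X → ℝ)) (hZ : IsZone Z)
    (v₀ : X → ℝ) (h₀ : ∀ x, 0 ≤ v₀ x)
    (R : Set (X → ℝ))
    (hR : R = {v | (∀ x, 0 ≤ v x) ∧ regEquiv (fun x => max (L x) (U x)) v₀ v}) :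
    R ⊆ aLU L U Z ↔ (aLUinv L U R ∩ Z).Nonempty := by
  constructor
  · intro hsub
    have hv₀R : v₀ ∈ R := by
      rw [hR]
      exact ⟨h₀, fun x => Or.inr ⟨rfl, Iff.rfl⟩, fun x y _ _ => Iff.rfl⟩
    obtain ⟨v', hv'Z, hsim⟩ := hsub hv₀R
    exact ⟨v', ⟨v₀, hv₀R, hsim⟩, hv'Z⟩
  · rintro ⟨v', ⟨v, hvR, hsim⟩, hv'Z⟩ w hwR
    obtain ⟨l, hl⟩ := hZ
    rw [hR] at hvR hwR
    obtain ⟨hv0, h1v, h2v⟩ := hvR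
    obtain ⟨hw0, h1w, h2w⟩ := hwR
    -- derive region-equivalence facts between v and w directly
    have heq1 : ∀ x, (((max (L x) (U x) : ℕ) : ℝ) < v x ∧ ((max (L x) (U x) : ℕ) : ℝ) < w x) ∨
        (⌊v x⌋ = ⌊w x⌋ ∧ (Int.fract (v x) = 0 ↔ Int.fract (w x) = 0)) := by
      intro x
      rcases h1v x with ⟨ha, hb⟩ | ⟨hf1, hz1⟩ <;> rcases h1w x with ⟨ha', hb'⟩ | ⟨hf2, hz2⟩
      · exact Or.inl ⟨hb, hb'⟩
      · left
        refine ⟨hb, ?_⟩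
        have := (int_lt_transfer_s11 hf2 hz2 ((max (L x) (U x) : ℕ) : ℤ)).mp (by exact_mod_cast ha)
        exact_mod_cast this
      · left
        refine ⟨?_, hb'⟩
        have := (int_lt_transfer_s11 hf1 hz1 ((max (L x) (U x) : ℕ) : ℤ)).mp (by exact_mod_cast ha')
        exact_mod_cast this
      · exact Or.inr ⟨hf1.symm.trans hf2, hz1.symm.trans hz2⟩
    have hble : ∀ x, v x ≤ ((max (L x) (U x) : ℕ) : ℝ) → v₀ x ≤ ((max (L x) (U x) : ℕ) : ℝ) := by
      intro x hx
      rcases h1v x with ⟨ha, hb⟩ | ⟨hf, hz⟩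
      · exact absurd hx (not_le.mpr hb)
      · have := (int_le_transfer hf hz ((max (L x) (U x) : ℕ) : ℤ)).mpr (by exact_mod_cast hx)
        exact_mod_cast this
    have heq2 : ∀ x y, v x ≤ ((max (L x) (U x) : ℕ) : ℝ) → v y ≤ ((max (L y) (U y) : ℕ) : ℝ) →
        (Int.fract (v x) < Int.fract (v y) ↔ Int.fract (w x) < Int.fract (w y)) := by
      intro x y hx hy
      have h0x := hble x hx
      have h0y := hble y hy
      exact (h2v x y h0x h0y).symm.trans (h2w x y h0x h0y)
    obtain ⟨w', hsimw, hQ1, hQ3, hQ2⟩ := key_construction L U v w v' heq1 heq2 hsim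
    refine ⟨w', ?_, hsimw⟩
    rw [hl] at hv'Z ⊢
    intro cst hcst
    exact csat_transfer_s11 hQ1 hQ3 hQ2 cst (hv'Z cst hcst)
end
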